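/- Let $g$ be the generating function of the degree distribution, and let $\theta, h, \phi : [0,\infty) \to \mathbb{R}$ be $C^1$ functions with $\theta(0)=1$, $\phi(0)=0$, satisfying $\theta'(t) = -\lambda\phi(t)$, $h(t) = g'(\theta(t))/g'(1)$, and $\phi'(t) = -(\lambda+\gamma)\phi(t) - h'(t)$. Then for all $t \geq 0$, $\phi(t) = \theta(t) - \frac{\gamma}{\lambda}(1-\theta(t)) - \frac{g'(\theta(t))}{g'(1)}$, and consequently $\theta'(t) = -\lambda\theta(t) + \gamma(1-\theta(t)) + \lambda\frac{g'(\theta(t))}{g'(1)}$. -/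

import Mathlib

open Real

/-- Dynamics of `θ(t)` in the Volz–Miller derivation: given `θ' = -λφ`,
`h(t) = g'(θ(t))/g'(1)` and `φ' = -(λ+γ)φ - h'`, with `θ(0)=1`, `φ(0)=0`, one has
`φ(t) = θ(t) - (γ/λ)(1-θ(t)) - g'(θ(t))/g'(1)`, and consequently
`θ'(t) = -λθ(t) + γ(1-θ(t)) + λ g'(θ(t))/g'(1)`. -/
theorem theta_dynamics (l γ : ℝ) (hl : 0 < l) (hγ : 0 < γ)
    (g : ℝ → ℝ) (hg : ContDiff ℝ 2 g) (hg1 : 0 < deriv g 1)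
    (θ φ : ℝ → ℝ) (h : ℝ → ℝ)
    (hθ0 : θ 0 = 1) (hφ0 : φ 0 = 0)
    (hh : ∀ t, h t = deriv g (θ t) / deriv g 1)
    (hhdiff : Differentiable ℝ h)
    (hθ' : ∀ t, HasDerivAt θ (-l * φ t) t)
    (hφ' : ∀ t, HasDerivAt φ (-(l + γ) * φ t - deriv h t) t) :
    ∀ t, 0 ≤ t →
      (φ t = θ t - γ / l * (1 - θ t) - deriv g (θ t) / deriv g 1 ∧
       HasDerivAt θ
         (-l * θ t + γ * (1 - θ t) + l * (deriv g (θ t) / deriv g 1)) t) := by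
  have hc : deriv g 1 ≠ 0 := ne_of_gt hg1
  have hF : ∀ s, HasDerivAt (fun u => φ u - θ u + γ / l * (1 - θ u) + h u) 0 s := by
    intro s
    have h1 := hφ' s
    have h2 := hθ' s
    have h3 := (hhdiff s).hasDerivAt
    have h4 := ((h1.sub h2).add (((hasDerivAt_const s (1:ℝ)).sub h2).const_mul (γ / l))).add h3
    refine HasDerivAt.congr_deriv h4 ?_
    field_simp [hl.ne']
    ring
  have hFconst : ∀ s, φ s - θ s + γ / l * (1 - θ s) + h s
      = φ 0 - θ 0 + γ / l * (1 - θ 0) + h 0 := by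
    intro s
    exact is_const_of_deriv_eq_zero (fun u => ((hF u).differentiableAt))
      (fun u => (hF u).deriv) s 0
  have hh0 : h 0 = 1 := by
    rw [hh 0, hθ0, div_self hc]
  intro t ht
  have key : φ t = θ t - γ / l * (1 - θ t) - deriv g (θ t) / deriv g 1 := by
    have := hFconst t
    rw [hθ0, hφ0, hh0, hh t] at this
    linarith
  refine ⟨key, ?_⟩
  have := hθ' t
  convert this using 1
  rw [key]
  field_simp
  ring
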